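/- Let k ≥ 0, d ≥ 1 and m ≥ 0 be integers, and define t_i = −d·m if d | i and t_i = 0 if d ∤ i, for 1 ≤ i ≤ k. Then Z_k(t_1,…,t_k) = k! · [u^k](1 − u^d)^m, where [u^k] denotes the coefficient of u^k. -/

import Mathlib

open Finset Polynomial

/-- `Z_k(t_1,…,t_k) = Σ N(c_1,…,c_k) ∏_{i=1}^k t_i^{c_i}`, the sum being over all tuples
`(c_1,…,c_k)` of nonnegative integers with `Σ i·c_i = k`, where
`N(c_1,…,c_k) = k! / ∏ (i^{c_i}·c_i!)`.  The tuple is encoded as `c : Fin k → ℕ`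
with `c_{i+1} = c i`; note each `c_i ≤ k` automatically, so ranging over
`Finset.range (k+1)` loses nothing.  For `k = 0` this gives `Z_0 = 1`. -/
def Zk {R : Type*} [CommRing R] (k : ℕ) (t : ℕ → R) : R :=
  ∑ c ∈ (Fintype.piFinset fun _ : Fin k => Finset.range (k + 1)).filter
      (fun c => ∑ i : Fin k, (i.val + 1) * c i = k),
    ((Nat.factorial k / ∏ i : Fin k, (i.val + 1) ^ (c i) * Nat.factorial (c i) : ℕ) : R) *
      ∏ i : Fin k, (t (i.val + 1)) ^ (c i)

lemma step1 (l c : ℕ) (hl : l ≠ 0) : l ^ c * c.factorial ∣ (l * c).factorial := by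
  have h := Nat.uniformBell_mul_eq c hl
  have h1 : l ^ c * c.factorial ∣ l.factorial ^ c * c.factorial :=
    mul_dvd_mul_right (pow_dvd_pow_of_dvd (Nat.dvd_factorial (Nat.pos_of_ne_zero hl) le_rfl) c) _
  refine h1.trans ?_
  rw [mul_comm l c, ← h]
  have : l.factorial ^ c * c.factorial ∣ c.uniformBell l * (l.factorial ^ c * c.factorial) :=
    dvd_mul_left _ _
  rwa [← mul_assoc] at this

lemma lemD {n : ℕ} (c : Fin n → ℕ) :
    (∏ i : Fin n, (i.val + 1) ^ (c i) * Nat.factorial (c i)) ∣ (∑ i : Fin n, (i.val + 1) * c i).factorial := by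
  refine dvd_trans (Finset.prod_dvd_prod_of_dvd _ _ fun i _ => step1 (i.val+1) (c i) (Nat.succ_ne_zero _)) ?_
  exact Nat.prod_factorial_dvd_factorial_sum _ _

noncomputable def ff (k : ℕ) (t : ℕ → ℚ) (i : Fin k) : ℚ[X] :=
  ∑ j ∈ range (k+1), C ((t (i.val+1))^j / (((i.val+1):ℚ)^j * (Nat.factorial j))) * X^((i.val+1)*j)

lemma Zk_eq (k : ℕ) (t : ℕ → ℚ) :
    Zk k t = (k.factorial : ℚ) * (∏ i : Fin k, ff k t i).coeff k := by
  unfold ff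
  rw [Finset.prod_univ_sum]
  have hterm : ∀ c : Fin k → ℕ,
      (∏ i : Fin k, C ((t (i.val+1))^(c i) / (((i.val+1):ℚ)^(c i) * (Nat.factorial (c i)))) * X^((i.val+1)*(c i)))
      = C (∏ i : Fin k, (t (i.val+1))^(c i) / (((i.val+1):ℚ)^(c i) * (Nat.factorial (c i)))) *
        X ^ (∑ i : Fin k, (i.val+1) * c i) := by
    intro c
    rw [Finset.prod_mul_distrib, map_prod, Finset.prod_pow_eq_pow_sum]
  simp only [hterm]
  rw [finset_sum_coeff]
  simp only [coeff_C_mul, coeff_X_pow, mul_ite, mul_one, mul_zero]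
  rw [Finset.mul_sum]
  unfold Zk
  rw [Finset.sum_filter]
  refine Finset.sum_congr rfl fun c hc => ?_
  by_cases hw : ∑ i : Fin k, (i.val + 1) * c i = k
  · rw [if_pos hw, if_pos hw.symm]
    have hD : ((∏ i : Fin k, (i.val + 1) ^ (c i) * Nat.factorial (c i) : ℕ) : ℚ)
        = ∏ i : Fin k, (((i.val+1):ℚ)^(c i) * (Nat.factorial (c i))) := by push_cast; ring
    have hDne : ((∏ i : Fin k, (i.val + 1) ^ (c i) * Nat.factorial (c i) : ℕ) : ℚ) ≠ 0 := by
      rw [hD]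
      refine Finset.prod_ne_zero_iff.mpr fun i _ => ?_
      positivity
    have hdvd : (∏ i : Fin k, (i.val + 1) ^ (c i) * Nat.factorial (c i)) ∣ k.factorial := by
      have h2 := lemD c
      rwa [hw] at h2
    rw [Nat.cast_div hdvd hDne, Finset.prod_div_distrib, hD]
    field_simp
  · rw [if_neg hw, if_neg (fun h => hw h.symm), mul_zero]

lemma coeff_one_sub_X_pow (m j : ℕ) :
    ((1 - X : ℚ[X]) ^ m).coeff j = (-1 : ℚ) ^ j * m.choose j := by
  have key : ((1 - X : ℚ[X]) ^ m) = ∑ s ∈ range (m+1), C ((-1:ℚ)^(s+m) * m.choose s) * X^(m-s) := by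
    rw [sub_pow]
    refine Finset.sum_congr rfl fun s _ => ?_
    rw [map_mul, C_pow, C_neg, C_1, C_eq_natCast]
    ring
  rw [key, finset_sum_coeff]
  simp only [coeff_C_mul, coeff_X_pow, mul_ite, mul_one, mul_zero]
  by_cases hj : j ≤ m
  · rw [Finset.sum_eq_single (m - j)]
    · rw [if_pos (by omega), Nat.choose_symm hj]
      congr 1
      rw [neg_one_pow_eq_pow_mod_two, neg_one_pow_eq_pow_mod_two (n := j)]
      congr 1
      omega
    · intro s hs hne
      rw [if_neg]
      simp only [Finset.mem_range] at hs
      omega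
    · intro h
      exact absurd (Finset.mem_range.mpr (by omega)) h
  · rw [Finset.sum_eq_zero, Nat.choose_eq_zero_of_lt (by omega)]
    · simp
    · intro s hs
      rw [if_neg]
      simp only [Finset.mem_range] at hs
      omega


lemma Zk_cast (k : ℕ) (t : ℕ → ℤ) : ((Zk k t : ℤ) : ℚ) = Zk k (fun i => (t i : ℚ)) := by
  unfold Zk
  rw [Int.cast_sum]
  refine Finset.sum_congr rfl fun c hc => ?_
  rw [Int.cast_mul, Int.cast_natCast, Int.cast_prod]
  push_cast
  ring

noncomputable def ee (K m l : ℕ) : ℚ[X] :=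
  ∑ j ∈ range (K+1), C ((-(m:ℚ))^j / ((l:ℚ)^j * (Nat.factorial j))) * X^(l*j)

lemma ee_coeff_zero (K m l : ℕ) (hl : 1 ≤ l) : (ee K m l).coeff 0 = 1 := by
  unfold ee
  rw [finset_sum_coeff]
  rw [Finset.sum_eq_single 0]
  · simp
  · intro j hj hne
    rw [coeff_C_mul, coeff_X_pow, if_neg (by positivity), mul_zero]
  · intro h
    exact absurd (Finset.mem_range.mpr (by omega)) h

lemma eeDeriv (K m l : ℕ) (hl : 1 ≤ l) :
    derivative (ee K m l) = -(C (m:ℚ)) * X^(l-1) * ee K m l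
      + C ((m:ℚ) * ((-(m:ℚ))^K / ((l:ℚ)^K * (Nat.factorial K)))) * X^(l*K + l - 1) := by
  unfold ee
  rw [derivative_sum]
  have hmain : ∀ j : ℕ, derivative (C ((-(m:ℚ))^j / ((l:ℚ)^j * (Nat.factorial j))) * X^(l*j))
      = C (((-(m:ℚ))^j / ((l:ℚ)^j * (Nat.factorial j))) * ((l*j : ℕ) : ℚ)) * X^(l*j-1) := by
    intro j
    rw [derivative_C_mul, derivative_X_pow, ← mul_assoc, ← C_mul]
  simp only [hmain]
  rw [Finset.sum_range_succ']
  have hstep : ∀ j : ℕ, C (((-(m:ℚ))^(j+1) / ((l:ℚ)^(j+1) * (Nat.factorial (j+1)))) * ((l*(j+1) : ℕ) : ℚ)) * X^(l*(j+1)-1)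
      = C ((-(m:ℚ)) * ((-(m:ℚ))^j / ((l:ℚ)^j * (Nat.factorial j)))) * X^(l*j + l - 1) := by
    intro j
    have he : l * (j+1) - 1 = l*j + l - 1 := by
      have : l*(j+1) = l*j+l := by ring
      omega
    have hval : ((-(m:ℚ))^(j+1) / ((l:ℚ)^(j+1) * (Nat.factorial (j+1)))) * ((l*(j+1) : ℕ) : ℚ)
        = (-(m:ℚ)) * ((-(m:ℚ))^j / ((l:ℚ)^j * (Nat.factorial j))) := by
      have hl0 : (l:ℚ) ≠ 0 := by positivity
      have hf : ((Nat.factorial j : ℕ) : ℚ) ≠ 0 := by positivity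
      rw [Nat.factorial_succ]
      push_cast
      field_simp
      ring
    rw [hval, he]
  simp only [hstep]
  have hrhs : -(C (m:ℚ)) * X^(l-1) * (∑ j ∈ range (K+1), C ((-(m:ℚ))^j / ((l:ℚ)^j * (Nat.factorial j))) * X^(l*j))
      = ∑ j ∈ range (K+1), C ((-(m:ℚ)) * ((-(m:ℚ))^j / ((l:ℚ)^j * (Nat.factorial j)))) * X^(l*j + l - 1) := by
    rw [Finset.mul_sum]
    refine Finset.sum_congr rfl fun j hj => ?_
    have hexp : l*j + l - 1 = (l - 1) + l*j := by omega
    rw [← C_neg, hexp, pow_add, C_mul]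
    ring
  rw [hrhs, Finset.sum_range_succ]
  have h0 : C (((-(m:ℚ))^0 / ((l:ℚ)^0 * ((Nat.factorial 0 : ℕ) : ℚ))) * ((l*0 : ℕ) : ℚ)) * X^(l*0-1) = 0 := by
    simp
  rw [h0, add_zero]
  have hK : C ((-(m:ℚ)) * ((-(m:ℚ))^K / ((l:ℚ)^K * (Nat.factorial K)))) * X^(l*K + l - 1)
      = - (C ((m:ℚ) * ((-(m:ℚ))^K / ((l:ℚ)^K * (Nat.factorial K)))) * X^(l*K + l - 1)) := by
    rw [← neg_mul, ← C_neg]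
    ring_nf
  rw [hK]
  ring

lemma prod_coeff_zero (m K L : ℕ) : (∏ l ∈ range L, ee K m (l+1)).coeff 0 = 1 := by
  rw [← Polynomial.constantCoeff_apply, map_prod]
  rw [Finset.prod_congr rfl (fun l _ => ?_), Finset.prod_const_one]
  rw [Polynomial.constantCoeff_apply, ee_coeff_zero K m (l+1) (by omega)]

lemma deriv_finprod {ι : Type*} [DecidableEq ι] (s : Finset ι) (f : ι → ℚ[X]) :
    derivative (∏ i ∈ s, f i) = ∑ i ∈ s, (∏ r ∈ s.erase i, f r) * derivative (f i) := by
  exact Polynomial.derivative_prod_finset (s := s) (f := f)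

lemma coreRec (m K L : ℕ) (hLK : L ≤ K) (s : ℕ) (hs1 : 1 ≤ s) (hsK : s ≤ K) :
    (∏ l ∈ range L, ee K m (l+1)).coeff s * s =
      -(m:ℚ) * ∑ l ∈ range (min L s), (∏ r ∈ range L, ee K m (r+1)).coeff (s-1-l) := by
  set P := ∏ l ∈ range L, ee K m (l+1) with hP
  have hder : derivative P = ∑ l ∈ range L,
      (-(C (m:ℚ)) * X^l * P + (C ((m:ℚ) * ((-(m:ℚ))^K / (((l+1:ℕ):ℚ)^K * (Nat.factorial K)))) *
        (∏ r ∈ (range L).erase l, ee K m (r+1))) * X^((l+1)*K + l)) := by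
    rw [hP, deriv_finprod]
    refine Finset.sum_congr rfl fun l hl => ?_
    rw [eeDeriv K m (l+1) (by omega)]
    have hee : (l+1) - 1 = l := by omega
    have hN : (l+1)*K + (l+1) - 1 = (l+1)*K + l := by omega
    rw [hee, hN, mul_add]
    congr 1
    · rw [← Finset.mul_prod_erase (range L) (fun r => ee K m (r+1)) hl]
      ring
    · ring
  have hco := congrArg (fun p : ℚ[X] => p.coeff (s-1)) hder
  simp only [coeff_derivative] at hco
  rw [finset_sum_coeff] at hco
  have hc : ((s-1:ℕ):ℚ) + 1 = (s:ℚ) := by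
    rw [Nat.cast_sub hs1]; ring
  rw [hc] at hco
  have hterm : ∀ l ∈ range L,
      ((-(C (m:ℚ)) * X^l * P + (C ((m:ℚ) * ((-(m:ℚ))^K / (((l+1:ℕ):ℚ)^K * (Nat.factorial K)))) *
        (∏ r ∈ (range L).erase l, ee K m (r+1))) * X^((l+1)*K + l)).coeff (s-1))
      = if l ≤ s-1 then -(m:ℚ) * P.coeff (s-1-l) else 0 := by
    intro l hl
    rw [coeff_add]
    have h1 : (-(C (m:ℚ)) * X^l * P).coeff (s-1) = if l ≤ s-1 then -(m:ℚ) * P.coeff (s-1-l) else 0 := by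
      have hrw : -(C (m:ℚ)) * X^l * P = (C (-(m:ℚ)) * P) * X^l := by rw [C_neg]; ring
      rw [hrw, coeff_mul_X_pow']
      split_ifs with h
      · rw [coeff_C_mul]
      · rfl
    have h2 : (((C ((m:ℚ) * ((-(m:ℚ))^K / (((l+1:ℕ):ℚ)^K * (Nat.factorial K)))) *
        (∏ r ∈ (range L).erase l, ee K m (r+1))) * X^((l+1)*K + l)).coeff (s-1)) = 0 := by
      rw [coeff_mul_X_pow', if_neg]
      have hK1 : K ≤ (l+1)*K := Nat.le_mul_of_pos_left K (by omega)
      omega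
    rw [h1, h2, add_zero]
  rw [Finset.sum_congr rfl hterm] at hco
  have hset : (range L).filter (fun l => l ≤ s-1) = range (min L s) := by
    ext x
    simp only [Finset.mem_filter, Finset.mem_range, Nat.lt_min]
    omega
  rw [← Finset.sum_filter, hset, ← Finset.mul_sum] at hco
  have hs1' : s - 1 + 1 = s := by omega
  rwa [hs1'] at hco

lemma lemB (m : ℕ) : ∀ j : ℕ, (m:ℚ) * ∑ r ∈ range j, (-1:ℚ)^r * m.choose r
    = (j:ℚ) * (-1:ℚ)^(j+1) * m.choose j := by
  intro j
  induction j with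
  | zero => simp
  | succ j ih =>
    rw [Finset.sum_range_succ, mul_add, ih]
    have key : ((m:ℚ) - j) * m.choose j = ((j:ℚ)+1) * m.choose (j+1) := by
      rcases le_or_gt j m with h | h
      · have hn := Nat.choose_succ_right_eq m j
        have := congrArg (fun n : ℕ => (n : ℚ)) hn
        push_cast [Nat.cast_sub h] at this
        linarith
      · rw [Nat.choose_eq_zero_of_lt h, Nat.choose_eq_zero_of_lt (by omega)]
        simp
    have expand : (j:ℚ)*(-1:ℚ)^(j+1)*(m.choose j) + (m:ℚ)*((-1:ℚ)^j * m.choose j)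
        = (-1:ℚ)^j * (((m:ℚ) - j) * m.choose j) := by ring
    rw [expand, key]
    push_cast
    ring

lemma core (m K L : ℕ) (hLK : L ≤ K) :
    ∀ j, j ≤ L → (∏ l ∈ range L, ee K m (l+1)).coeff j = (-1:ℚ)^j * m.choose j := by
  intro j
  induction j using Nat.strong_induction_on with
  | _ j ih =>
    intro hj
    rcases Nat.eq_zero_or_pos j with h0 | h1
    · subst h0
      simpa using prod_coeff_zero m K L
    · have hrec := coreRec m K L hLK j h1 (hj.trans hLK)
      rw [min_eq_right hj, Finset.sum_range_reflect] at hrec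
      have hsum : ∑ l ∈ range j, (∏ r ∈ range L, ee K m (r+1)).coeff l
          = ∑ l ∈ range j, (-1:ℚ)^l * m.choose l := by
        refine Finset.sum_congr rfl fun l hl => ?_
        rw [Finset.mem_range] at hl
        exact ih l (by omega) (by omega)
      rw [hsum] at hrec
      have hB := lemB m j
      have hj0 : (j:ℚ) ≠ 0 := by positivity
      have : (∏ l ∈ range L, ee K m (l+1)).coeff j * j = ((-1:ℚ)^j * m.choose j) * j := by
        rw [hrec]
        have : -(m:ℚ) * ∑ r ∈ range j, (-1:ℚ)^r * m.choose r = -((j:ℚ) * (-1:ℚ)^(j+1) * m.choose j) := by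
          rw [← hB]; ring
        rw [this]
        ring
      exact mul_right_cancel₀ hj0 this

section spec
variable (k d m : ℕ) (hd : 1 ≤ d)

noncomputable def tQ (d m : ℕ) : ℕ → ℚ := fun i => if d ∣ i then -((d:ℚ)*(m:ℚ)) else 0

lemma ffa (i : Fin k) (h : ¬ d ∣ (i.val+1)) : ff k (tQ d m) i = 1 := by
  unfold ff
  rw [Finset.sum_eq_single 0]
  · simp
  · intro j hj hne
    unfold tQ
    rw [if_neg h, zero_pow hne, zero_div, map_zero, zero_mul]
  · intro h'
    exact absurd (Finset.mem_range.mpr (by omega)) h'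

lemma ffb (i : Fin k) (h : d ∣ (i.val+1)) (hd : 1 ≤ d) :
    ff k (tQ d m) i = expand ℚ d (ee k m ((i.val+1)/d)) := by
  set l := (i.val+1)/d with hldef
  have hl : i.val + 1 = d * l := (Nat.mul_div_cancel' h).symm
  have hl1 : 1 ≤ l := by
    rcases Nat.eq_zero_or_pos l with h0 | h1
    · rw [h0, mul_zero] at hl; omega
    · exact h1
  unfold ff ee
  rw [map_sum]
  refine Finset.sum_congr rfl fun j hj => ?_
  rw [map_mul, expand_C, map_pow, expand_X, ← pow_mul]
  have hexp : (i.val+1)*j = d * (l*j) := by rw [hl]; ring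
  rw [hexp]
  congr 2
  unfold tQ
  rw [if_pos h]
  have hcast : ((i.val:ℚ) + 1) = (d:ℚ) * (l:ℚ) := by
    exact_mod_cast congrArg (Nat.cast : ℕ → ℚ) hl
  rw [hcast]
  have hd0 : ((d:ℚ))^j ≠ 0 := by positivity
  rw [show (-((d:ℚ)*(m:ℚ)))^j = (d:ℚ)^j * (-(m:ℚ))^j by ring,
      show ((d:ℚ)*(l:ℚ))^j = (d:ℚ)^j * (l:ℚ)^j by ring, mul_assoc,
      mul_div_mul_left _ _ hd0]

lemma prod_ff (hd : 1 ≤ d) :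
    ∏ i : Fin k, ff k (tQ d m) i = expand ℚ d (∏ l ∈ range (k/d), ee k m (l+1)) := by
  rw [map_prod]
  rw [← Finset.prod_filter_of_ne (p := fun i : Fin k => d ∣ i.val + 1)
    (fun i _ hne => by
      by_contra hnd
      exact hne (ffa k d m i hnd))]
  refine Finset.prod_bij' (fun i _ => (i.val+1)/d - 1)
    (fun l hl => ⟨d*(l+1)-1, ?_⟩) ?_ ?_ ?_ ?_ ?_
  · rw [Finset.mem_range] at hl
    have h1 : d*(l+1) ≤ d*(k/d) := Nat.mul_le_mul_left d (by omega)
    have h2 : d*(k/d) ≤ k := by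
      rw [mul_comm]
      exact Nat.div_mul_le_self k d
    have h3 : 1 ≤ d*(l+1) := Nat.one_le_iff_ne_zero.mpr (Nat.mul_ne_zero (by omega) (by omega))
    omega
  · intro a ha
    rw [Finset.mem_filter] at ha
    rw [Finset.mem_range]
    show (a.val+1)/d - 1 < k/d
    have hdvd := ha.2
    have hle : d ≤ a.val + 1 := Nat.le_of_dvd (by omega) hdvd
    have h1 : (a.val+1)/d ≤ k/d := Nat.div_le_div_right (by omega)
    have h2 : 1 ≤ (a.val+1)/d := by
      rw [Nat.le_div_iff_mul_le (by omega)]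
      omega
    omega
  · intro l hl
    rw [Finset.mem_filter]
    refine ⟨Finset.mem_univ _, ?_⟩
    have : d*(l+1)-1+1 = d*(l+1) := by
      have h1 : 1 ≤ d*(l+1) := Nat.one_le_iff_ne_zero.mpr (Nat.mul_ne_zero (by omega) (by omega))
      omega
    rw [this]
    exact dvd_mul_right d (l+1)
  · intro a ha
    rw [Finset.mem_filter] at ha
    have hdvd := ha.2
    have hle : d ≤ a.val + 1 := Nat.le_of_dvd (by omega) hdvd
    have h2 : 1 ≤ (a.val+1)/d := by
      rw [Nat.le_div_iff_mul_le (by omega)]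
      omega
    apply Fin.ext
    show d*((a.val+1)/d - 1 + 1) - 1 = a.val
    have h3 : ((a.val+1)/d - 1 + 1) = (a.val+1)/d := by omega
    rw [h3]
    have h4 := Nat.mul_div_cancel' hdvd
    omega
  · intro l hl
    have h1 : 1 ≤ d*(l+1) := Nat.one_le_iff_ne_zero.mpr (Nat.mul_ne_zero (by omega) (by omega))
    show (d*(l+1)-1+1)/d - 1 = l
    have h2 : d*(l+1)-1+1 = d*(l+1) := by omega
    rw [h2, Nat.mul_div_cancel_left _ (by omega : 0 < d)]
    omega
  · intro a ha
    rw [Finset.mem_filter] at ha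
    have hdvd := ha.2
    have hle : d ≤ a.val + 1 := Nat.le_of_dvd (by omega) hdvd
    have h2 : 1 ≤ (a.val+1)/d := by
      rw [Nat.le_div_iff_mul_le (by omega)]
      omega
    rw [ffb k d m a hdvd hd]
    show _ = expand ℚ d (ee k m ((a.val+1)/d - 1 + 1))
    have h5 : (a.val+1)/d - 1 + 1 = (a.val+1)/d := by omega
    rw [h5]

end spec


theorem stmt_17 (k d m : ℕ) (hd : 1 ≤ d) :
    Zk k (fun i => if d ∣ i then -((d : ℤ) * (m : ℤ)) else 0) =
      (Nat.factorial k : ℤ) * ((1 - Polynomial.X ^ d) ^ m : Polynomial ℤ).coeff k := by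
  have hcast : ∀ z w : ℤ, (z:ℚ) = (w:ℚ) → z = w := fun z w h => by exact_mod_cast h
  refine hcast _ _ ?_
  rw [Zk_cast]
  have ht : (fun i => (((if d ∣ i then -((d:ℤ)*(m:ℤ)) else 0) : ℤ) : ℚ)) = tQ d m := by
    funext i
    unfold tQ
    split_ifs <;> push_cast <;> ring
  rw [ht, Zk_eq k (tQ d m), prod_ff k d m hd, Polynomial.coeff_expand (by omega : 0 < d)]
  have hR : (((Nat.factorial k : ℤ) * ((1 - Polynomial.X ^ d) ^ m : Polynomial ℤ).coeff k : ℤ) : ℚ)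
      = (Nat.factorial k : ℚ) * ((1 - Polynomial.X ^ d) ^ m : ℚ[X]).coeff k := by
    push_cast
    congr 1
    have hmap : ((1 - Polynomial.X ^ d) ^ m : ℚ[X])
        = Polynomial.map (Int.castRingHom ℚ) ((1 - Polynomial.X ^ d) ^ m : Polynomial ℤ) := by
      simp [Polynomial.map_pow]
    rw [hmap, Polynomial.coeff_map]
    simp
  rw [hR]
  have hQ : ((1 - X^d)^m : ℚ[X]) = expand ℚ d ((1 - X)^m) := by
    rw [map_pow, map_sub, map_one, expand_X]
  rw [hQ, Polynomial.coeff_expand (by omega : 0 < d)]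
  congr 1
  split_ifs with hdk
  · rw [core m k (k/d) (Nat.div_le_self k d) (k/d) le_rfl, coeff_one_sub_X_pow]
  · rfl
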